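/- In a labelled CFG in which every variable is defined before it is used, if node sets Q1 and Q2 are both closed under data dependence and Q1 ∩ Q2 = ∅, then rv(Q1,v) ∩ rv(Q2,v) = ∅ for every node v. -/

import Mathlib

namespace Slicing

/-- A path is a nonempty list of nodes, consecutive ones related by `succ`,
starting at `v` and ending at `v'`. -/
def IsPath {V : Type} (succ : V → V → Prop) (p : List V) (v v' : V) : Prop :=
  p.Chain' succ ∧ p.head? = some v ∧ p.getLast? = some v'

/-- A control-flow graph: an edge relation and an `End` node with no successors,
reachable from every node. -/
structure CFG (V : Type) where
  succ : V → V → Prop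
  End : V
  end_no_succ : ∀ w, ¬ succ End w
  reach_end : ∀ v, ∃ p, IsPath succ p v End

variable {V : Type}

/-- `v1` postdominates `v`. -/
def PD (G : CFG V) (v v1 : V) : Prop :=
  ∀ p, IsPath G.succ p v G.End → v1 ∈ p

/-- `v1` is a proper postdominator of `v`. -/
def ProperPD (G : CFG V) (v v1 : V) : Prop :=
  PD G v v1 ∧ v1 ≠ v

/-- `v1` is a first proper postdominator of `v`: every path from `v` to any other
proper postdominator of `v` contains `v1`. -/
def IsFPPD (G : CFG V) (v v1 : V) : Prop :=
  ProperPD G v v1 ∧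
    ∀ v2, ProperPD G v v2 → v2 ≠ v1 → ∀ p, IsPath G.succ p v v2 → v1 ∈ p

/-- Maximum number of edges of an acyclic path from `v` to `v'`. -/
noncomputable def LAP (G : CFG V) (v v' : V) : ℕ :=
  sSup {n | ∃ p, IsPath G.succ p v v' ∧ p.Nodup ∧ p.length = n + 1}

/-- A node is cycle-inducing if, with `v'` its first proper postdominator,
some successor `vi` of `v` satisfies `LAP vi v' ≥ LAP v v'`. -/
def CycleInducing (G : CFG V) (v : V) : Prop :=
  ∃ v', IsFPPD G v v' ∧ ∃ vi, G.succ v vi ∧ LAP G v v' ≤ LAP G vi v'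

/-- `v` stays outside `Q` until `v'`: every path from `v` to `v'` in which `v'`
occurs only at the final position contains no node of `Q` except possibly `v'`. -/
def StaysOutside (G : CFG V) (Q : Set V) (v v' : V) : Prop :=
  ∀ p, IsPath G.succ p v v' → v' ∉ p.dropLast → ∀ w ∈ p, w ∈ Q → w = v'

/-- `v2` is data dependent on `v1`. -/
def DataDep {Var : Type} (G : CFG V) (Def Use : V → Set Var) (v1 v2 : V) : Prop :=
  ∃ x, x ∈ Use v2 ∧ x ∈ Def v1 ∧
    ∃ p, IsPath G.succ p v1 v2 ∧ 2 ≤ p.length ∧ ∀ w ∈ p.tail.dropLast, x ∉ Def w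

/-- `Q` is closed under data dependence. -/
def ClosedDD {Var : Type} (G : CFG V) (Def Use : V → Set Var) (Q : Set V) : Prop :=
  ∀ v1 v2, v2 ∈ Q → DataDep G Def Use v1 v2 → v1 ∈ Q

/-- The `Q`-relevant variables at `v`. -/
def rv {Var : Type} (G : CFG V) (Def Use : V → Set Var) (Q : Set V) (v : V) : Set Var :=
  {x | ∃ v' ∈ Q, x ∈ Use v' ∧
    ∃ p, IsPath G.succ p v v' ∧ p.Nodup ∧ ∀ w ∈ p, w ≠ v' → x ∉ Def w}

/-- `v'` is a next visible in `Q` of `v`. -/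
def IsNextVisible (G : CFG V) (Q : Set V) (v v' : V) : Prop :=
  (v' ∈ Q ∨ v' = G.End) ∧
    ∀ u, (u ∈ Q ∨ u = G.End) → ∀ p, IsPath G.succ p v u → v' ∈ p

/-- `Q` provides next visibles. -/
def ProvidesNextVisibles (G : CFG V) (Q : Set V) : Prop :=
  ∀ v, ∃ v', IsNextVisible G Q v v'

/-- A weak slice set provides next visibles and is closed under data dependence. -/
def WeakSliceSet {Var : Type} (G : CFG V) (Def Use : V → Set Var) (Q : Set V) : Prop :=
  ProvidesNextVisibles G Q ∧ ClosedDD G Def Use Q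

end Slicing

namespace Slicing

variable {V : Type} {succ : V → V → Prop}

lemma isPath_tail {a b : V} {rest : List V} {v : V}
    (h : IsPath succ (a :: b :: rest) a v) : IsPath succ (b :: rest) b v := by
  obtain ⟨hc, _, hl⟩ := h
  exact ⟨hc.tail, rfl, by simpa [List.getLast?_cons_cons] using hl⟩

lemma isPath_append {p q : List V} {a b c : V}
    (hp : IsPath succ p a b) (hq : IsPath succ q b c) :
    IsPath succ (p ++ q.tail) a c := by
  obtain ⟨hpc, hph, hpl⟩ := hp
  obtain ⟨hqc, hqh, hql⟩ := hq
  have hpne : p ≠ [] := by rintro rfl; simp at hph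
  cases q with
  | nil => simp at hqh
  | cons b' rest =>
    obtain rfl : b = b' := by simpa using hqh.symm
    cases rest with
    | nil =>
      obtain rfl : b = c := by simpa using hql
      exact ⟨by simpa using hpc, by simpa using hph, by simpa using hpl⟩
    | cons d rest' =>
      refine ⟨?_, ?_, ?_⟩
      · refine List.IsChain.append hpc hqc.tail ?_
        intro x hx y hy
        have hx' : x = b := by rw [hpl] at hx; symm; simpa using hx
        have hy' : y = d := by symm; simpa using hy
        subst hx'; subst hy'
        exact (List.isChain_cons_cons.mp hqc).1
      · rw [List.head?_append, hph]; rfl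
      · rw [List.getLast?_append]
        rw [List.getLast?_cons_cons] at hql
        rw [show (b :: d :: rest').tail = d :: rest' from rfl, hql]; rfl

lemma extract {Var : Type} (Def : V → Set Var) (x : Var) :
    ∀ (p : List V) (a v : V), IsPath succ p a v → (∃ w ∈ p, x ∈ Def w) → x ∉ Def v →
      ∃ w τ, x ∈ Def w ∧ IsPath succ τ w v ∧ 2 ≤ τ.length ∧ ∀ u ∈ τ.tail, x ∉ Def u := by
  intro p
  induction p with
  | nil => intro a v _ hex _; simp at hex
  | cons a rest ih =>
    intro a' v hpath hex hxv
    obtain rfl : a = a' := by simpa using hpath.2.1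
    by_cases hrest : ∃ w ∈ rest, x ∈ Def w
    · cases rest with
      | nil => simp at hrest
      | cons b rest' => exact ih b v (isPath_tail hpath) hrest hxv
    · push_neg at hrest
      have hxa : x ∈ Def a := by
        obtain ⟨w, hw, hwd⟩ := hex
        rcases List.mem_cons.mp hw with rfl | hw'
        · exact hwd
        · exact absurd hwd (hrest w hw')
      have hne : rest ≠ [] := by
        rintro rfl
        have : v = a := by simpa using hpath.2.2.symm
        exact hxv (this ▸ hxa)
      refine ⟨a, a :: rest, hxa, hpath, ?_, ?_⟩
      · cases rest with
        | nil => exact absurd rfl hne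
        | cons b r => simp [Nat.succ_le_succ, Nat.le_add_left]
      · intro u hu; exact hrest u hu

lemma getLast_not_mem_dropLast {p : List V} (hnd : p.Nodup) {v' : V}
    (hl : p.getLast? = some v') : v' ∉ p.dropLast := by
  have hne : p ≠ [] := by rintro rfl; simp at hl
  have hv' : p.getLast hne = v' := by
    rw [List.getLast?_eq_getLast hne] at hl; exact Option.some_injective _ hl
  intro hmem
  have := List.dropLast_concat_getLast hne
  rw [← this] at hnd
  rw [hv'] at this
  have := (List.nodup_append.mp hnd).2.2
  exact this v' hmem v' (by simp [hv']) rfl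

end Slicing

namespace Slicing

/-- If every variable is defined before it is used, and `Q1`, `Q2` are disjoint sets
both closed under data dependence, then `rv(Q1,v)` and `rv(Q2,v)` are disjoint. -/
theorem rv_disjoint {V Var : Type} [Fintype V] (G : CFG V)
    (Def Use : V → Set Var) (Start : V)
    (hreach : ∀ v, ∃ p, IsPath G.succ p Start v)
    (hdbu : ∀ v x, x ∈ Use v → ∀ p, IsPath G.succ p Start v →
      ∃ v0 ∈ p, v0 ≠ v ∧ x ∈ Def v0)
    (Q1 Q2 : Set V)
    (h1 : ClosedDD G Def Use Q1) (h2 : ClosedDD G Def Use Q2)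
    (hdisj : Q1 ∩ Q2 = ∅) (v : V) :
    rv G Def Use Q1 v ∩ rv G Def Use Q2 v = ∅ := by
  ext x
  simp only [Set.mem_inter_iff, Set.mem_empty_iff_false, iff_false]
  rintro ⟨⟨v1, hv1Q, hUse1, p1, hp1, hnd1, hND1⟩, ⟨v2, hv2Q, hUse2, p2, hp2, hnd2, hND2⟩⟩
  have hvp1 : v ∈ p1 := List.mem_of_mem_head? (by rw [hp1.2.1]; rfl)
  have hvp2 : v ∈ p2 := List.mem_of_mem_head? (by rw [hp2.2.1]; rfl)
  have hQdisj : ∀ w, w ∈ Q1 → w ∈ Q2 → False := by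
    intro w hw1 hw2
    have : w ∈ Q1 ∩ Q2 := ⟨hw1, hw2⟩
    rw [hdisj] at this; exact this
  by_cases hxv : x ∈ Def v
  · have e1 : v = v1 := by by_contra h; exact hND1 v hvp1 h hxv
    have e2 : v = v2 := by by_contra h; exact hND2 v hvp2 h hxv
    exact hQdisj v (e1 ▸ hv1Q) (e2 ▸ hv2Q)
  · obtain ⟨σ, hσ⟩ := hreach v
    have hbig := isPath_append hσ hp1
    obtain ⟨v0, hv0mem, hv0ne, hv0def⟩ := hdbu v1 x hUse1 _ hbig
    have hv0σ : v0 ∈ σ := by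
      rcases List.mem_append.mp hv0mem with h | h
      · exact h
      · exact absurd hv0def (hND1 v0 (List.mem_of_mem_tail h) hv0ne)
    obtain ⟨w, τ, hwdef, hτ, hτlen, hτtail⟩ :=
      extract Def x σ Start v hσ ⟨v0, hv0σ, hv0def⟩ hxv
    have hτne : τ ≠ [] := by rintro rfl; simp at hτlen
    have key : ∀ (v' : V) (p : List V) (Q : Set V), v' ∈ Q → x ∈ Use v' →
        IsPath G.succ p v v' → p.Nodup → (∀ u ∈ p, u ≠ v' → x ∉ Def u) →
        ClosedDD G Def Use Q → w ∈ Q := by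
      intro v' p Q hQ hu hp hnd hND hcl
      apply hcl w v' hQ
      refine ⟨x, hu, hwdef, τ ++ p.tail, isPath_append hτ hp, ?_, ?_⟩
      · rw [List.length_append]; omega
      · intro u hu'
        rw [List.tail_append_of_ne_nil hτne] at hu'
        by_cases hpt : p.tail = []
        · rw [hpt] at hu'
          simp only [List.append_nil] at hu'
          exact hτtail u (List.mem_of_mem_dropLast hu')
        · rw [List.dropLast_append_of_ne_nil hpt] at hu'
          rcases List.mem_append.mp hu' with h | h
          · exact hτtail u h
          · have hup : u ∈ p := List.mem_of_mem_tail (List.mem_of_mem_dropLast h)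
            have hune : u ≠ v' := by
              rintro rfl
              have : u ∈ p.dropLast := by
                rw [← List.tail_dropLast] at h
                exact List.mem_of_mem_tail h
              exact getLast_not_mem_dropLast hnd hp.2.2 this
            exact hND u hup hune
    exact hQdisj w (key v1 p1 Q1 hv1Q hUse1 hp1 hnd1 hND1 h1)
      (key v2 p2 Q2 hv2Q hUse2 hp2 hnd2 hND2 h2)


end Slicing
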